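/- Let b = ℂh + ℂe with [h,e] = 2e, s ⊆ ℤ_{<0} nonempty generating rℤ, χ : s ∪ {0} → ℂ*, and φ : H₋ → U(b) the homomorphism with φ(d) = −(r/2)h, φ(T(i)) = χ(i)e^{−i/r} for i ∈ s ∪ {0}, φ(T(i)) = 0 otherwise. For a b-module M, let M^φ be the H₋-module with x·v = φ(x)v. Then M^φ is a simple H₋-module if and only if M is a simple b-module. -/

import Mathlib

open scoped Classical

/-- for a `b`-module `M` (operators `Hop`, `Eop` with
`[Hop, Eop] = 2 Eop`), the `H₋`-module `M^φ` obtained by pulling back along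
`φ(d) = −(r/2)h`, `φ(T(i)) = χ(i) e^{−i/r}` for `i ∈ s ∪ {0}` (and `0` otherwise)
is simple if and only if `M` is a simple `b`-module. -/
theorem stmt19 {M : Type*} [AddCommGroup M] [Module ℂ M] [Nontrivial M]
    (Hop Eop : Module.End ℂ M)
    (hrel : Hop * Eop - Eop * Hop = (2 : ℂ) • Eop)
    (s : Set ℤ) (hs : s.Nonempty) (hneg : ∀ i ∈ s, i < 0)
    (r : ℤ) (hr : 0 < r)
    (hgen : AddSubgroup.closure s = AddSubgroup.zmultiples r)
    (χ : ℤ → ℂ) (hχ : ∀ i ∈ s ∪ {0}, χ i ≠ 0) :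
    (∀ W : Submodule ℂ M,
        (∀ v ∈ W, ((-(r : ℂ) / 2) • Hop) v ∈ W) →
        (∀ i : ℤ, i ≤ 0 → ∀ v ∈ W,
          (if i ∈ s ∪ {0} then χ i • Eop ^ ((-i) / r).toNat else 0) v ∈ W) →
        W = ⊥ ∨ W = ⊤) ↔
      (∀ W : Submodule ℂ M,
        (∀ v ∈ W, Hop v ∈ W) → (∀ v ∈ W, Eop v ∈ W) → W = ⊥ ∨ W = ⊤) := by
  have hrC : (r : ℂ) ≠ 0 := by
    exact_mod_cast (Int.cast_ne_zero (α := ℂ)).mpr (by omega)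
  have expand : ∀ (c : ℂ) (X : Module.End ℂ M), (Hop - c • 1) * X = Hop * X - c • X := by
    intro c X; rw [sub_mul, smul_mul_assoc, one_mul]
  have hEH : Eop * Hop = (Hop - (2:ℂ) • 1) * Eop := by
    rw [expand, ← hrel]; abel
  have hcomm : ∀ N : ℕ, Eop ^ N * Hop = (Hop - ((2*N : ℂ)) • 1) * Eop ^ N := by
    intro N
    induction N with
    | zero => simp
    | succ N ih =>
      push_cast
      calc Eop ^ (N+1) * Hop = Eop ^ N * (Eop * Hop) := by rw [pow_succ, mul_assoc]
        _ = Eop ^ N * (Hop * Eop - (2:ℂ) • Eop) := by rw [hEH, expand]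
        _ = (Eop ^ N * Hop) * Eop - (2:ℂ) • (Eop ^ N * Eop) := by
            rw [mul_sub, mul_smul_comm, mul_assoc]
        _ = ((Hop - ((2*N : ℂ)) • 1) * Eop ^ N) * Eop - (2:ℂ) • Eop ^ (N+1) := by
            rw [ih, pow_succ]
        _ = Hop * Eop ^ (N+1) - ((2*N : ℂ)) • Eop ^ (N+1) - (2:ℂ) • Eop ^ (N+1) := by
            rw [expand, sub_mul, smul_mul_assoc, mul_assoc, ← pow_succ]
        _ = (Hop - (2*((N:ℂ)+1)) • 1) * Eop ^ (N+1) := by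
            rw [expand, sub_sub, ← add_smul]
            congr 2
            ring
  have hcommN : ∀ N j : ℕ,
      Eop ^ N * Hop ^ j = (Hop - ((2*N : ℂ)) • 1) ^ j * Eop ^ N := by
    intro N j
    induction j with
    | zero => simp
    | succ j ih =>
      rw [pow_succ, ← mul_assoc, ih, mul_assoc, hcomm, ← mul_assoc, ← pow_succ]
  constructor
  · intro A W hWH hWE
    apply A W
    · intro v hv
      simpa using W.smul_mem (-(r:ℂ)/2) (hWH v hv)
    · intro i _ v hv
      split_ifs with h
      · have hp : ∀ n : ℕ, (Eop ^ n) v ∈ W := by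
          intro n
          induction n with
          | zero => simpa using hv
          | succ n ih =>
            rw [pow_succ', Module.End.mul_apply]
            exact hWE _ ih
        simpa using W.smul_mem (χ i) (hp _)
      · simp
  · intro B W h1 h2
    have hH : ∀ v ∈ W, Hop v ∈ W := by
      intro v hv
      have h := h1 v hv
      rw [LinearMap.smul_apply] at h
      have h' := W.smul_mem (-(r:ℂ)/2)⁻¹ h
      rwa [inv_smul_smul₀ (div_ne_zero (neg_ne_zero.mpr hrC) two_ne_zero)] at h'
    have hdvd : ∀ i ∈ s, ∃ n : ℕ, 0 < n ∧ i = -(r * n) ∧ ((-i) / r).toNat = n := by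
      intro i hi
      have hmem : i ∈ AddSubgroup.zmultiples r := by
        rw [← hgen]; exact AddSubgroup.subset_closure hi
      obtain ⟨k, hk⟩ := AddSubgroup.mem_zmultiples_iff.mp hmem
      have hk' : i = k * r := by rw [← hk]; simp [mul_comm]
      have hkneg : k < 0 := by nlinarith [hneg i hi]
      have htk : (((-k).toNat : ℤ)) = -k := Int.toNat_of_nonneg (by omega)
      refine ⟨(-k).toNat, by omega, ?_, ?_⟩
      · rw [htk, mul_neg, neg_neg, mul_comm]; exact hk'
      · have hdiv : (-i) / r = -k := by
          rw [hk', ← neg_mul]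
          exact Int.mul_ediv_cancel _ (by omega)
        rw [hdiv]
    have hEmem : ∀ i ∈ s, ∀ v ∈ W, (Eop ^ ((-i) / r).toNat) v ∈ W := by
      intro i hi v hv
      have h := h2 i (le_of_lt (hneg i hi)) v hv
      have hcond : i ∈ s ∪ {0} := Set.mem_union_left _ hi
      rw [if_pos hcond, LinearMap.smul_apply] at h
      have h' := W.smul_mem (χ i)⁻¹ h
      rwa [inv_smul_smul₀ (hχ i hcond)] at h'
    by_cases hbotW : W = ⊥
    · exact Or.inl hbotW
    right
    obtain ⟨w, hwW, hw0⟩ := (Submodule.ne_bot_iff W).mp hbotW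
    have hEHapp : ∀ v, Eop (Hop v) = Hop (Eop v) - (2:ℂ) • Eop v := by
      intro v
      have h := congrArg (fun f : Module.End ℂ M => f v) hrel
      simp only [LinearMap.sub_apply, Module.End.mul_apply, LinearMap.smul_apply] at h
      rw [← h]; abel
    have hK := B (LinearMap.ker Eop)
      (fun v hv => by
        simp only [LinearMap.mem_ker] at hv ⊢
        rw [hEHapp v, hv]; simp)
      (fun v hv => by
        simp only [LinearMap.mem_ker] at hv ⊢
        rw [hv]; simp)
    rcases hK with hKbot | hKtop
    swap
    · have hE0 : ∀ v, Eop v = 0 := fun v =>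
        LinearMap.mem_ker.mp (hKtop ▸ Submodule.mem_top)
      rcases B W hH (fun v _ => by rw [hE0]; exact W.zero_mem) with h | h
      · exact absurd h hbotW
      · exact h
    have hR := B (LinearMap.range Eop)
      (fun v hv => by
        obtain ⟨x, rfl⟩ := hv
        rw [show Hop (Eop x) = Eop (Hop x) + (2:ℂ) • Eop x from by rw [hEHapp]; abel]
        exact Submodule.add_mem _ ⟨Hop x, rfl⟩ (Submodule.smul_mem _ _ ⟨x, rfl⟩))
      (fun v _ => ⟨v, rfl⟩)
    have hEsurj : Function.Surjective Eop := by
      rcases hR with hR | hR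
      · exfalso
        obtain ⟨x, hx⟩ := exists_ne (0 : M)
        have hx0 : Eop x = 0 := by
          have : Eop x ∈ (⊥ : Submodule ℂ M) := hR ▸ LinearMap.mem_range_self Eop x
          simpa using this
        have : x ∈ LinearMap.ker Eop := LinearMap.mem_ker.mpr hx0
        rw [hKbot] at this
        exact hx (by simpa using this)
      · exact LinearMap.range_eq_top.mp hR
    have hEpow : ∀ n : ℕ, Function.Surjective (Eop ^ n : Module.End ℂ M) := by
      intro n
      induction n with
      | zero => intro u; exact ⟨u, by simp⟩
      | succ n ih =>
        intro u
        obtain ⟨x, hx⟩ := hEsurj u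
        obtain ⟨y, hy⟩ := ih x
        exact ⟨y, by rw [pow_succ', Module.End.mul_apply, hy, hx]⟩
    -- the monoid of good exponents
    have hMon0 : ∀ v ∈ W, (Eop ^ 0) v ∈ W := fun v hv => by simpa using hv
    have hMonAdd : ∀ {m n : ℕ}, (∀ v ∈ W, (Eop ^ m) v ∈ W) → (∀ v ∈ W, (Eop ^ n) v ∈ W) →
        ∀ v ∈ W, (Eop ^ (m+n)) v ∈ W := by
      intro m n hm hn v hv
      rw [pow_add, Module.End.mul_apply]
      exact hm _ (hn _ hv)
    have hMonMul : ∀ (k : ℕ) {n : ℕ}, (∀ v ∈ W, (Eop ^ n) v ∈ W) →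
        ∀ v ∈ W, (Eop ^ (k * n)) v ∈ W := by
      intro k
      induction k with
      | zero => intro n _; simpa using hMon0
      | succ k ih =>
        intro n hn
        have h := hMonAdd (ih hn) hn
        rwa [show k*n+n = (k+1)*n by ring] at h
    have hkey : ∃ a : ℕ, (∀ v ∈ W, (Eop ^ a) v ∈ W) ∧ (∀ v ∈ W, (Eop ^ (a+1)) v ∈ W) := by
      have hP : ∀ x ∈ AddSubgroup.closure s,
          ∃ a b : ℕ, (∀ v ∈ W, (Eop ^ a) v ∈ W) ∧ (∀ v ∈ W, (Eop ^ b) v ∈ W) ∧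
            x = r * ((a:ℤ) - b) := by
        intro x hx
        induction hx using AddSubgroup.closure_induction with
        | mem i hi =>
          obtain ⟨n, hn0, hin, hitn⟩ := hdvd i hi
          refine ⟨0, n, hMon0, ?_, by rw [hin]; push_cast; ring⟩
          intro v hv
          have := hEmem i hi v hv
          rwa [hitn] at this
        | zero => exact ⟨0, 0, hMon0, hMon0, by simp⟩
        | add x y hx hy ihx ihy =>
          obtain ⟨a1, b1, ha1, hb1, hx1⟩ := ihx
          obtain ⟨a2, b2, ha2, hb2, hx2⟩ := ihy
          exact ⟨a1+a2, b1+b2, hMonAdd ha1 ha2, hMonAdd hb1 hb2,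
            by rw [hx1, hx2]; push_cast; ring⟩
        | neg x hx ihx =>
          obtain ⟨a, b, ha, hb, hx1⟩ := ihx
          exact ⟨b, a, hb, ha, by rw [hx1]; ring⟩
      have hrmem : (r:ℤ) ∈ AddSubgroup.closure s := by
        rw [hgen]; exact AddSubgroup.mem_zmultiples r
      obtain ⟨a, b, ha, hb, habe⟩ := hP r hrmem
      have hab1 : (a:ℤ) - b = 1 := by
        have := mul_left_cancel₀ (show (r:ℤ) ≠ 0 by omega)
          (show (r:ℤ) * ((a:ℤ) - b) = r * 1 by rw [← habe, mul_one])
        exact this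
      have hab : a = b + 1 := by omega
      exact ⟨b, hb, hab ▸ ha⟩
    obtain ⟨a, haMon, ha1Mon⟩ := hkey
    have hbig : ∀ m : ℕ, a*a ≤ m → ∀ v ∈ W, (Eop ^ m) v ∈ W := by
      intro m hm
      rcases Nat.eq_zero_or_pos a with h0 | hpos
      · subst h0
        have := hMonMul m ha1Mon
        simpa using this
      · have ht : m % a < a := Nat.mod_lt m hpos
        have hq : a ≤ m / a := (Nat.le_div_iff_mul_le hpos).mpr (by nlinarith)
        obtain ⟨c, hc⟩ := Nat.le.dest (show m % a ≤ m / a by omega)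
        have hmeq : m = (m % a) * (a+1) + c * a := by
          have hd := Nat.div_add_mod m a
          calc m = a * (m / a) + m % a := hd.symm
            _ = a * (m % a + c) + m % a := by rw [hc]
            _ = (m % a) * (a+1) + c * a := by ring
        rw [hmeq]
        exact hMonAdd (hMonMul _ ha1Mon) (hMonMul _ haMon)
    -- H-stability under (Hop - c•1)^j
    have hWHc : ∀ (c : ℂ) (j : ℕ), ∀ v ∈ W, ((Hop - c • 1)^j) v ∈ W := by
      intro c j
      induction j with
      | zero => intro v hv; simpa using hv
      | succ j ih =>
        intro v hv
        rw [pow_succ, Module.End.mul_apply]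
        refine ih _ ?_
        rw [LinearMap.sub_apply, LinearMap.smul_apply, Module.End.one_apply]
        exact W.sub_mem (hH v hv) (W.smul_mem c hv)
    -- the span generated by w under Hop, Eop
    have hQH : ∀ v ∈ Submodule.span ℂ {x | ∃ j k : ℕ, (Hop^j) ((Eop^k) w) = x},
        Hop v ∈ Submodule.span ℂ {x | ∃ j k : ℕ, (Hop^j) ((Eop^k) w) = x} := by
      intro v hv
      induction hv using Submodule.span_induction with
      | mem x hx =>
        obtain ⟨j, k, rfl⟩ := hx
        exact Submodule.subset_span ⟨j+1, k, by rw [pow_succ', Module.End.mul_apply]⟩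
      | zero => rw [map_zero]; exact Submodule.zero_mem _
      | add x y hx hy ihx ihy => rw [map_add]; exact Submodule.add_mem _ ihx ihy
      | smul c x hx ihx => rw [map_smul]; exact Submodule.smul_mem _ c ihx
    have hQHc : ∀ (c : ℂ) (j : ℕ), ∀ v ∈ Submodule.span ℂ {x | ∃ j k : ℕ, (Hop^j) ((Eop^k) w) = x},
        ((Hop - c • 1)^j) v ∈ Submodule.span ℂ {x | ∃ j k : ℕ, (Hop^j) ((Eop^k) w) = x} := by
      intro c j
      induction j with
      | zero => intro v hv; simpa using hv
      | succ j ih =>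
        intro v hv
        rw [pow_succ, Module.End.mul_apply]
        refine ih _ ?_
        rw [LinearMap.sub_apply, LinearMap.smul_apply, Module.End.one_apply]
        exact Submodule.sub_mem _ (hQH v hv) (Submodule.smul_mem _ c hv)
    have hQE : ∀ v ∈ Submodule.span ℂ {x | ∃ j k : ℕ, (Hop^j) ((Eop^k) w) = x},
        Eop v ∈ Submodule.span ℂ {x | ∃ j k : ℕ, (Hop^j) ((Eop^k) w) = x} := by
      intro v hv
      induction hv using Submodule.span_induction with
      | mem x hx =>
        obtain ⟨j, k, rfl⟩ := hx
        have heq : Eop ((Hop^j) ((Eop^k) w)) = ((Hop - ((2*(1:ℕ) : ℂ)) • 1)^j) ((Eop^(1+k)) w) := by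
          have h := congrArg (fun f : Module.End ℂ M => f ((Eop^k) w)) (hcommN 1 j)
          simp only [Module.End.mul_apply, pow_one] at h
          rw [h, pow_add, Module.End.mul_apply, pow_one]
        rw [heq]
        exact hQHc _ j _ (Submodule.subset_span ⟨0, 1+k, by simp⟩)
      | zero => rw [map_zero]; exact Submodule.zero_mem _
      | add x y hx hy ihx ihy => rw [map_add]; exact Submodule.add_mem _ ihx ihy
      | smul c x hx ihx => rw [map_smul]; exact Submodule.smul_mem _ c ihx
    have hwQ : w ∈ Submodule.span ℂ {x | ∃ j k : ℕ, (Hop^j) ((Eop^k) w) = x} :=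
      Submodule.subset_span ⟨0, 0, by simp⟩
    have hQtop : Submodule.span ℂ {x | ∃ j k : ℕ, (Hop^j) ((Eop^k) w) = x} = ⊤ := by
      rcases B _ hQH hQE with h | h
      · exfalso
        rw [h] at hwQ
        exact hw0 (by simpa using hwQ)
      · exact h
    have hENQ : ∀ v ∈ Submodule.span ℂ {x | ∃ j k : ℕ, (Hop^j) ((Eop^k) w) = x},
        (Eop ^ (a*a)) v ∈ W := by
      intro v hv
      induction hv using Submodule.span_induction with
      | mem x hx =>
        obtain ⟨j, k, rfl⟩ := hx
        have heq : (Eop^(a*a)) ((Hop^j) ((Eop^k) w))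
            = ((Hop - ((2*(a*a : ℕ) : ℂ)) • 1)^j) ((Eop^(a*a+k)) w) := by
          have h := congrArg (fun f : Module.End ℂ M => f ((Eop^k) w)) (hcommN (a*a) j)
          simp only [Module.End.mul_apply] at h
          rw [h, pow_add, Module.End.mul_apply]
        rw [heq]
        exact hWHc _ j _ (hbig (a*a+k) (Nat.le_add_right _ _) w hwW)
      | zero => rw [map_zero]; exact W.zero_mem
      | add x y hx hy ihx ihy => rw [map_add]; exact W.add_mem ihx ihy
      | smul c x hx ihx => rw [map_smul]; exact W.smul_mem c ihx
    rw [eq_top_iff]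
    intro u _
    obtain ⟨v, hvu⟩ := hEpow (a*a) u
    exact hvu ▸ hENQ v (hQtop ▸ Submodule.mem_top)
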